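/- For any n × n complex matrices (or operators on a finite-dimensional complex vector space) A_1, ..., A_n, the sum over all permutations σ of the ordered products satisfies the inclusion-exclusion identity: ∑_{σ ∈ S_n} A_{σ(1)} A_{σ(2)} ⋯ A_{σ(n)} = (-1)^n ∑_{S ⊆ {1,...,n}} (-1)^{|S|} (∑_{i ∈ S} A_i)^n. -/

import Mathlib

open Finset

open Finset

lemma ryser_sum_pow {R : Type*} [Semiring R] {n : ℕ} (S : Finset (Fin n)) (A : Fin n → R) :
    ∀ m : ℕ, (∑ i ∈ S, A i) ^ m =
      ∑ f : Fin m → {x // x ∈ S}, (List.ofFn fun k => A (f k)).prod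
  | 0 => by simp
  | (m+1) => by
      rw [pow_succ', ryser_sum_pow S A m, ← Finset.sum_coe_sort S A, Finset.sum_mul_sum]
      have h := Fintype.sum_equiv (Fin.consEquiv (fun _ : Fin (m+1) => {x // x ∈ S})).symm
        (fun g => (List.ofFn fun k => A (g k)).prod)
        (fun p => A p.1 * (List.ofFn fun k => A ((p.2 k : {x // x ∈ S}))).prod)
        (fun g => by simp [List.ofFn_succ, Fin.consEquiv, Fin.tail])
      rw [h, Fintype.sum_prod_type]

lemma ryser_subtype_filter {R : Type*} [AddCommMonoid R] {n m : ℕ} (S : Finset (Fin n))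
    (P : (Fin m → Fin n) → R) :
    ∑ f : Fin m → {x // x ∈ S}, P (fun k => (f k : Fin n)) =
      ∑ f ∈ Finset.univ.filter (fun f : Fin m → Fin n => ∀ k, f k ∈ S), P f := by
  classical
  refine Finset.sum_bij (fun f _ => fun k => (f k : Fin n)) ?_ ?_ ?_ ?_
  · intro f _; simp
  · intro f _ g _ h
    funext k
    exact Subtype.ext (congrFun h k)
  · intro f hf
    simp only [mem_filter, mem_univ, true_and] at hf
    exact ⟨fun k => ⟨f k, hf k⟩, Finset.mem_univ _, rfl⟩
  · intro f _; rfl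

lemma ryser_powerset_sum {n : ℕ} (X : Finset (Fin n)) :
    ∑ R ∈ X.powerset, (-1 : ℂ) ^ R.card = if X = ∅ then 1 else 0 := by
  have h := Finset.sum_powerset_neg_one_pow_card (x := X)
  have h2 : ((∑ m ∈ X.powerset, (-1 : ℤ) ^ m.card : ℤ) : ℂ)
      = ∑ R ∈ X.powerset, (-1 : ℂ) ^ R.card := by push_cast; rfl
  rw [← h2, h]
  split_ifs <;> simp

lemma ryser_sign_sum {n : ℕ} (T : Finset (Fin n)) :
    ∑ S : Finset (Fin n), (if T ⊆ S then ((-1 : ℂ)) ^ S.card else 0) =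
      (-1 : ℂ) ^ T.card * (if Tᶜ = ∅ then 1 else 0) := by
  classical
  rw [← Finset.sum_filter]
  have key : ∑ S ∈ Finset.univ.filter (fun S : Finset (Fin n) => T ⊆ S), ((-1 : ℂ)) ^ S.card
      = ∑ R ∈ Tᶜ.powerset, (-1 : ℂ) ^ T.card * (-1 : ℂ) ^ R.card := by
    refine Finset.sum_bij (fun S _ => S \ T) ?_ ?_ ?_ ?_
    · intro S hS
      simp only [Finset.mem_powerset]
      intro x hx
      simp only [Finset.mem_sdiff] at hx
      simp [Finset.mem_compl, hx.2]
    · intro S hS S' hS' h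
      simp only [mem_filter, mem_univ, true_and] at hS hS'
      have := congrArg (· ∪ T) h
      simpa [Finset.sdiff_union_of_subset hS, Finset.sdiff_union_of_subset hS'] using this
    · intro R hR
      simp only [Finset.mem_powerset] at hR
      have hd : Disjoint R T := Finset.disjoint_left.mpr fun x hx => by
        have := hR hx
        simp only [Finset.mem_compl] at this
        exact this
      refine ⟨R ∪ T, by simp [Finset.subset_union_right], ?_⟩
      simp [Finset.union_sdiff_right, Finset.sdiff_eq_self_of_disjoint hd]
    · intro S hS
      simp only [mem_filter, mem_univ, true_and] at hS
      rw [← pow_add, add_comm]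
      congr 1
      exact (Finset.card_sdiff_add_card_eq_card hS).symm
  rw [key, ← Finset.mul_sum, ryser_powerset_sum]

/-- Ryser-type inclusion-exclusion formula for the permanent-like sum of ordered
products of (not necessarily commuting) operators. -/
theorem ryser_operator_formula (n D : ℕ) (A : Fin n → Matrix (Fin D) (Fin D) ℂ) :
    ∑ σ : Equiv.Perm (Fin n), (List.ofFn (fun i => A (σ i))).prod =
      ((-1 : ℂ) ^ n) • ∑ S : Finset (Fin n),
        ((-1 : ℂ) ^ S.card) • (∑ i ∈ S, A i) ^ n := by
  classical
  set P : (Fin n → Fin n) → Matrix (Fin D) (Fin D) ℂ :=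
    fun f => (List.ofFn fun k => A (f k)).prod with hP
  have step1 : ((-1 : ℂ) ^ n) • ∑ S : Finset (Fin n),
      ((-1 : ℂ) ^ S.card) • (∑ i ∈ S, A i) ^ n
      = ∑ S : Finset (Fin n), ∑ f : Fin n → Fin n,
          (if ∀ k, f k ∈ S then ((-1 : ℂ) ^ n * (-1 : ℂ) ^ S.card) else 0) • P f := by
    rw [Finset.smul_sum]
    refine Finset.sum_congr rfl fun S _ => ?_
    rw [ryser_sum_pow S A n, ryser_subtype_filter S P, smul_smul, Finset.smul_sum,
      Finset.sum_filter]
    simp only [ite_smul, zero_smul]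
  rw [step1, Finset.sum_comm]
  have step2 : ∀ f : Fin n → Fin n,
      (∑ S : Finset (Fin n), if ∀ k, f k ∈ S then ((-1 : ℂ) ^ n * (-1 : ℂ) ^ S.card) else 0)
      = if Function.Bijective f then 1 else 0 := by
    intro f
    have hcond : ∀ S : Finset (Fin n), (∀ k, f k ∈ S) ↔ Finset.image f Finset.univ ⊆ S := by
      intro S
      rw [Finset.image_subset_iff]
      simp
    calc ∑ S : Finset (Fin n), (if ∀ k, f k ∈ S then ((-1:ℂ)^n * (-1:ℂ)^S.card) else 0)
        = (-1:ℂ)^n * ∑ S : Finset (Fin n),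
            (if Finset.image f Finset.univ ⊆ S then (-1:ℂ)^S.card else 0) := by
          rw [Finset.mul_sum]
          exact Finset.sum_congr rfl fun S _ => by rw [if_congr (hcond S) rfl rfl, mul_ite, mul_zero]
      _ = (-1:ℂ)^n * ((-1:ℂ)^(Finset.image f Finset.univ).card *
            (if (Finset.image f Finset.univ)ᶜ = ∅ then 1 else 0)) := by
          rw [ryser_sign_sum]
      _ = if Function.Bijective f then 1 else 0 := by
          by_cases hf : Function.Bijective f
          · have himg : Finset.image f Finset.univ = Finset.univ :=
              Finset.image_univ_of_surjective hf.surjective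
            rw [himg, Finset.compl_univ, if_pos rfl, mul_one, Finset.card_univ,
              Fintype.card_fin, if_pos hf, ← mul_pow]
            norm_num
          · have hns : ¬ Function.Surjective f := fun hs =>
              hf (Finite.surjective_iff_bijective.mp hs)
            have himg : Finset.image f Finset.univ ≠ Finset.univ := by
              intro h
              apply hns
              intro y
              have : y ∈ Finset.image f Finset.univ := by rw [h]; exact Finset.mem_univ y
              obtain ⟨x, _, hx⟩ := Finset.mem_image.mp this
              exact ⟨x, hx⟩
            have hne : (Finset.image f Finset.univ)ᶜ ≠ ∅ := by
              simp only [ne_eq, Finset.compl_eq_empty_iff]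
              exact himg
            rw [if_neg hne, mul_zero, mul_zero, if_neg hf]
  calc ∑ σ : Equiv.Perm (Fin n), (List.ofFn (fun i => A (σ i))).prod
      = ∑ f ∈ Finset.univ.filter (fun f : Fin n → Fin n => Function.Bijective f), P f := by
        refine Finset.sum_bij (fun σ _ => ⇑σ) ?_ ?_ ?_ ?_
        · intro σ _; exact Finset.mem_filter.mpr ⟨Finset.mem_univ _, σ.bijective⟩
        · intro σ _ τ _ h; exact Equiv.coe_fn_injective h
        · intro f hf
          simp only [mem_filter, mem_univ, true_and] at hf
          exact ⟨Equiv.ofBijective f hf, Finset.mem_univ _, rfl⟩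
        · intro σ _; rfl
    _ = ∑ f : Fin n → Fin n,
          (∑ S : Finset (Fin n), if ∀ k, f k ∈ S then ((-1:ℂ)^n * (-1:ℂ)^S.card) else 0) • P f := by
        rw [Finset.sum_filter]
        refine Finset.sum_congr rfl fun f _ => ?_
        rw [step2 f]
        split_ifs <;> simp
  refine Finset.sum_congr rfl fun f _ => ?_
  rw [Finset.sum_smul]
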